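/- If H is a finitely generated subgroup of PSL_2(Z) and g ∈ H is non-trivial, and x is a word of minimal length such that u = x⁻¹gx is cyclically reduced, then the Stallings graph of H has a path labeled x from the base vertex to some vertex v₁ and a cycle labeled u at v₁. -/

import Mathlib

/-- Relators of the presentation `⟨a, b ∣ a² = b³ = 1⟩`. -/
def pslRels : Set (FreeGroup Bool) := {FreeGroup.of true ^ 2, FreeGroup.of false ^ 3}

/-- The modular group `PSL₂(ℤ) = ⟨a, b ∣ a² = b³ = 1⟩ = ℤ/2 * ℤ/3`. -/
abbrev PSL2Z : Type := PresentedGroup pslRels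

/-- The order-2 generator `a`. -/
def gen_a : PSL2Z := PresentedGroup.of true

/-- The order-3 generator `b`. -/
def gen_b : PSL2Z := PresentedGroup.of false

/-- The alphabet `{a, b, b⁻¹}`. -/
inductive Letter : Type
  | A | B | Binv
deriving DecidableEq

/-- Interpretation of a letter in `PSL₂(ℤ)`. -/
def Letter.toG : Letter → PSL2Z
  | .A => gen_a
  | .B => gen_b
  | .Binv => gen_b⁻¹

/-- Evaluation of a word over `{a, b, b⁻¹}` in `PSL₂(ℤ)`. -/
def evalWord (w : List Letter) : PSL2Z := (w.map Letter.toG).prod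

/-- Two adjacent letters alternate between `a` and `{b, b⁻¹}`. -/
def AltPair (x y : Letter) : Prop := (x = .A ∧ y ≠ .A) ∨ (x ≠ .A ∧ y = .A)

/-- A word is in normal form (freely reduced, no factor `a²`, `b²`, `b⁻²`):
it has length ≤ 1 or alternates `a` with letters in `{b, b⁻¹}`. -/
def NormalWord (w : List Letter) : Prop := w.Chain' AltPair

/-- `w` is a geodesic representative of `g`. -/
def Geodesic (w : List Letter) (g : PSL2Z) : Prop :=
  evalWord w = g ∧ ∀ w' : List Letter, evalWord w' = g → w.length ≤ w'.length

/-- A cyclically reduced word: a normal form of length 1, or starting with `a`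
and ending in `{b, b⁻¹}`, or starting in `{b, b⁻¹}` and ending with `a`. -/
def CyclicallyReducedWord (w : List Letter) : Prop :=
  NormalWord w ∧ (w.length = 1 ∨
    ∃ x y, w.head? = some x ∧ w.getLast? = some y ∧
      ((x = .A ∧ y ≠ .A) ∨ (x ≠ .A ∧ y = .A)))

/-- The right-coset equivalence: `x ≈ y` iff `x y⁻¹ ∈ H` (so `Hx = Hy`). -/
def cosetSetoid (H : Subgroup PSL2Z) : Setoid PSL2Z where
  r x y := x * y⁻¹ ∈ H
  iseqv := by
    refine ⟨fun x => by simpa using H.one_mem, fun {x y} h => ?_, fun {x y z} hxy hyz => ?_⟩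
    · simpa [mul_inv_rev] using H.inv_mem h
    · simpa [mul_assoc] using H.mul_mem hxy hyz

/-- The vertex set of the Schreier graph of `H`: right cosets of `H`. -/
def Coset (H : Subgroup PSL2Z) : Type := Quotient (cosetSetoid H)

/-- The base vertex `H·1` of the Schreier graph. -/
def base (H : Subgroup PSL2Z) : Coset H := Quotient.mk (cosetSetoid H) 1

/-- Reading a letter from a vertex of the Schreier graph: `Hg ↦ Hgℓ`. -/
def step {H : Subgroup PSL2Z} (v : Coset H) (ℓ : Letter) : Coset H :=
  Quotient.map (fun g => g * ℓ.toG)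
    (fun x y hxy => by
      change x * y⁻¹ ∈ H at hxy
      change x * ℓ.toG * (y * ℓ.toG)⁻¹ ∈ H
      simpa [mul_inv_rev, mul_assoc] using hxy) v

/-- Reading a word from a vertex of the Schreier graph. -/
def readW {H : Subgroup PSL2Z} (v : Coset H) (w : List Letter) : Coset H :=
  w.foldl step v

/-- Some geodesic (normal-form) cycle at the base vertex reads letter `m`
from the vertex `u`. -/
def edgeOkAux (H : Subgroup PSL2Z) (u : Coset H) (m : Letter) : Prop :=
  ∃ w p q : List Letter, NormalWord w ∧ evalWord w ∈ H ∧
    w = p ++ m :: q ∧ readW (base H) p = u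

/-- Traversing letter `ℓ` from `v` uses an edge of the Stallings graph `Γ(H)`
(the subgraph of the Schreier graph spanned by the geodesic cycles at the base
vertex); `a`-edges and `b`-edges may be traversed in either direction. -/
def edgeOk (H : Subgroup PSL2Z) (v : Coset H) : Letter → Prop
  | .A => edgeOkAux H v .A ∨ edgeOkAux H (step v .A) .A
  | .B => edgeOkAux H v .B ∨ edgeOkAux H (step v .B) .Binv
  | .Binv => edgeOkAux H v .Binv ∨ edgeOkAux H (step v .Binv) .B

/-- `w` labels a path in the Stallings graph `Γ(H)` starting at `v`. -/
def labelsPathFrom (H : Subgroup PSL2Z) : Coset H → List Letter → Prop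
  | _, [] => True
  | v, ℓ :: w => edgeOk H v ℓ ∧ labelsPathFrom H (step v ℓ) w

/-- `w` labels a cycle at `v` in the Stallings graph `Γ(H)`. -/
def labelsCycleAt (H : Subgroup PSL2Z) (v : Coset H) (w : List Letter) : Prop :=
  labelsPathFrom H v w ∧ readW v w = v

/-- `v` is a vertex of the Stallings graph `Γ(H)`. -/
def StallingsVertex (H : Subgroup PSL2Z) (v : Coset H) : Prop :=
  ∃ w p q : List Letter, NormalWord w ∧ evalWord w ∈ H ∧ w = p ++ q ∧
    readW (base H) p = v

/-- `H` is almost malnormal: `H ∩ H^x` is finite for every `x ∉ H`. -/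
def AlmostMalnormal (H : Subgroup PSL2Z) : Prop :=
  ∀ x : PSL2Z, x ∉ H → {g : PSL2Z | g ∈ H ∧ x * g * x⁻¹ ∈ H}.Finite


-- basic group facts
lemma rel_a : gen_a * gen_a = 1 := by
  have : ((QuotientGroup.mk (FreeGroup.of true ^ 2) : PSL2Z)) = 1 := by
    rw [QuotientGroup.eq_one_iff]
    exact Subgroup.subset_normalClosure (by left; rfl)
  rw [gen_a, PresentedGroup.of, ← map_mul, ← sq]; exact this

lemma rel_b : gen_b * gen_b * gen_b = 1 := by
  have : ((QuotientGroup.mk (FreeGroup.of false ^ 3) : PSL2Z)) = 1 := by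
    rw [QuotientGroup.eq_one_iff]
    exact Subgroup.subset_normalClosure (by right; rfl)
  rw [gen_b, PresentedGroup.of, ← map_mul, ← map_mul, ← pow_three']; exact this

lemma a_inv : gen_a⁻¹ = gen_a := by
  rw [inv_eq_iff_mul_eq_one]; exact rel_a

lemma b_sq : gen_b * gen_b = gen_b⁻¹ := by
  rw [eq_inv_iff_mul_eq_one]; exact rel_b

/-- formal inverse of a letter -/
def Letter.inv : Letter → Letter
  | .A => .A
  | .B => .Binv
  | .Binv => .B

lemma Letter.toG_inv (ℓ : Letter) : ℓ.inv.toG = ℓ.toG⁻¹ := by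
  cases ℓ <;> simp [Letter.inv, Letter.toG, a_inv]

lemma Letter.inv_inv (ℓ : Letter) : ℓ.inv.inv = ℓ := by cases ℓ <;> rfl

lemma Letter.inv_eq_A (ℓ : Letter) : ℓ.inv = .A ↔ ℓ = .A := by cases ℓ <;> simp [Letter.inv]

lemma Letter.toG_cube (ℓ : Letter) (h : ℓ ≠ .A) : ℓ.toG * ℓ.toG * ℓ.toG = 1 := by
  cases ℓ
  · exact absurd rfl h
  · exact rel_b
  · show gen_b⁻¹ * gen_b⁻¹ * gen_b⁻¹ = 1
    rw [← mul_inv_rev, ← mul_inv_rev, inv_eq_one]; exact rel_b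

lemma Letter.toG_sq (ℓ : Letter) (h : ℓ ≠ .A) : ℓ.toG * ℓ.toG = ℓ.toG⁻¹ := by
  rw [eq_inv_iff_mul_eq_one]; exact ℓ.toG_cube h

/-- formal inverse of a word -/
def invWord (w : List Letter) : List Letter := (w.map Letter.inv).reverse

lemma evalWord_nil : evalWord [] = 1 := rfl

lemma evalWord_cons (ℓ : Letter) (w : List Letter) :
    evalWord (ℓ :: w) = ℓ.toG * evalWord w := by
  simp [evalWord]

lemma evalWord_append (v w : List Letter) :
    evalWord (v ++ w) = evalWord v * evalWord w := by
  simp [evalWord]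

lemma evalWord_singleton (ℓ : Letter) : evalWord [ℓ] = ℓ.toG := by
  simp [evalWord]

lemma evalWord_invWord (w : List Letter) : evalWord (invWord w) = (evalWord w)⁻¹ := by
  induction w with
  | nil => simp [invWord, evalWord]
  | cons ℓ w ih =>
      rw [evalWord_cons, show invWord (ℓ :: w) = invWord w ++ [ℓ.inv] by simp [invWord],
        evalWord_append, ih, evalWord_singleton, Letter.toG_inv, mul_inv_rev]

lemma AltPair.symm {x y : Letter} (h : AltPair x y) : AltPair y x := by
  rcases h with ⟨h1, h2⟩ | ⟨h1, h2⟩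
  · exact Or.inr ⟨h2, h1⟩
  · exact Or.inl ⟨h2, h1⟩

lemma altPair_inv {x y : Letter} (h : AltPair x y) : AltPair x.inv y.inv := by
  rcases h with ⟨h1, h2⟩ | ⟨h1, h2⟩
  · exact Or.inl ⟨(Letter.inv_eq_A x).2 h1, fun hc => h2 ((Letter.inv_eq_A y).1 hc)⟩
  · exact Or.inr ⟨fun hc => h1 ((Letter.inv_eq_A x).1 hc), (Letter.inv_eq_A y).2 h2⟩

lemma normal_invWord {w : List Letter} (h : NormalWord w) : NormalWord (invWord w) := by
  rw [NormalWord, invWord, List.Chain', List.isChain_reverse, List.isChain_map]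
  exact List.IsChain.imp (fun a b hab => (altPair_inv hab).symm) h

lemma invWord_head? (w : List Letter) : (invWord w).head? = w.getLast?.map Letter.inv := by
  rw [invWord, List.head?_reverse, List.getLast?_map]

section CosetLemmas
variable {H : Subgroup PSL2Z}

abbrev mkC (H : Subgroup PSL2Z) (s : PSL2Z) : Coset H := Quotient.mk (cosetSetoid H) s

lemma base_eq : base H = mkC H 1 := rfl

lemma mkC_eq_mkC {s t : PSL2Z} : mkC H s = mkC H t ↔ s * t⁻¹ ∈ H :=
  ⟨fun h => Quotient.exact h, fun h => Quotient.sound h⟩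

lemma step_mkC (s : PSL2Z) (ℓ : Letter) : step (mkC H s) ℓ = mkC H (s * ℓ.toG) := rfl

lemma readW_mkC (s : PSL2Z) (w : List Letter) :
    readW (mkC H s) w = mkC H (s * evalWord w) := by
  induction w generalizing s with
  | nil => simp [readW, evalWord]
  | cons ℓ w ih =>
      show readW (step (mkC H s) ℓ) w = _
      rw [step_mkC, ih, evalWord_cons, mul_assoc]

lemma readW_base (w : List Letter) : readW (base H) w = mkC H (evalWord w) := by
  rw [base_eq, readW_mkC, one_mul]

lemma labelsPathFrom_append (v : Coset H) (p q : List Letter) :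
    labelsPathFrom H v (p ++ q) ↔ labelsPathFrom H v p ∧ labelsPathFrom H (readW v p) q := by
  induction p generalizing v with
  | nil => simp [labelsPathFrom, readW]
  | cons ℓ p ih =>
      show (edgeOk H v ℓ ∧ labelsPathFrom H (step v ℓ) (p ++ q)) ↔ _
      rw [ih]
      show _ ↔ (edgeOk H v ℓ ∧ _) ∧ labelsPathFrom H (readW (step v ℓ) p) q
      tauto

lemma edgeOk_of_aux {v : Coset H} {ℓ : Letter} (h : edgeOkAux H v ℓ) : edgeOk H v ℓ := by
  cases ℓ <;> exact Or.inl h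

lemma edgeOk_of_aux_rev {v : Coset H} {ℓ : Letter} (h : edgeOkAux H (step v ℓ) ℓ.inv) :
    edgeOk H v ℓ := by
  cases ℓ <;> exact Or.inr h

lemma edgeOkAux_intro {W : List Letter} (hW : NormalWord W) (hWH : evalWord W ∈ H)
    (p : List Letter) (ℓ : Letter) (q : List Letter) (hdec : W = p ++ ℓ :: q) :
    edgeOkAux H (mkC H (evalWord p)) ℓ :=
  ⟨W, p, q, hW, hWH, hdec, readW_base p⟩

/-- every normal cycle at the base labels a path from the base -/
lemma pathFrom_of_normal_cycle {W : List Letter} (hW : NormalWord W) (hWH : evalWord W ∈ H) :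
    labelsPathFrom H (base H) W := by
  suffices h : ∀ q p : List Letter, W = p ++ q → labelsPathFrom H (readW (base H) p) q by
    simpa [readW] using h W [] rfl
  intro q
  induction q with
  | nil => exact fun p _ => trivial
  | cons ℓ q ih =>
      intro p hdec
      refine ⟨edgeOk_of_aux (by rw [readW_base]; exact edgeOkAux_intro hW hWH p ℓ q hdec), ?_⟩
      have := ih (p ++ [ℓ]) (by simp [hdec])
      have h2 : readW (base H) (p ++ [ℓ]) = step (readW (base H) p) ℓ := by
        rw [readW, List.foldl_append]; rfl
      rwa [h2] at this
end CosetLemmas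

lemma cyc_reverse {w : List Letter} (h : CyclicallyReducedWord w) :
    CyclicallyReducedWord w.reverse := by
  obtain ⟨hch, hcyc⟩ := h
  refine ⟨by rw [NormalWord, List.Chain', List.isChain_reverse]; exact hch.imp fun a b hab => hab.symm, ?_⟩
  rcases hcyc with hlen | ⟨xh, yl, hh, hl, halt⟩
  · exact Or.inl (by simpa using hlen)
  · exact Or.inr ⟨yl, xh, by rwa [List.head?_reverse], by rwa [List.getLast?_reverse],
      AltPair.symm halt⟩

lemma cyc_rot_fwd {m : Letter} {u₁ : List Letter} (h : CyclicallyReducedWord (m :: u₁)) :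
    CyclicallyReducedWord (u₁ ++ [m]) := by
  rcases eq_or_ne u₁ [] with rfl | hne
  · simpa using h
  obtain ⟨hch, hcyc⟩ := h
  have htail : NormalWord u₁ := (List.isChain_cons.1 hch).2
  have hhead : ∀ c ∈ u₁.head?, AltPair m c := (List.isChain_cons.1 hch).1
  have hAltlast : AltPair m (u₁.getLast hne) := by
    obtain ⟨xh, yl, hh, hl, halt⟩ := hcyc.resolve_left (by simp [hne])
    have hxh : xh = m := by simp at hh; exact hh.symm
    have hyl : yl = u₁.getLast hne := by
      rw [List.getLast?_cons, List.getLast?_eq_getLast hne] at hl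
      simpa using hl.symm
    rw [← hxh, ← hyl]; exact halt
  refine ⟨List.isChain_append.2 ⟨htail, List.isChain_singleton m, ?_⟩,
    Or.inr ⟨u₁.head hne, m, ?_, List.getLast?_concat, ?_⟩⟩
  · intro a ha b hb
    rw [List.getLast?_eq_getLast hne] at ha
    simp at ha hb
    rw [← ha, ← hb]; exact hAltlast.symm
  · rw [List.head?_append_of_ne_nil _ hne, List.head?_eq_head hne]
  · exact AltPair.symm (hhead _ (List.head?_eq_head hne))

lemma cyc_rot_bwd {m : Letter} {u₂ : List Letter} (h : CyclicallyReducedWord (u₂ ++ [m])) :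
    CyclicallyReducedWord (m :: u₂) := by
  have := cyc_rot_fwd (m := m) (u₁ := u₂.reverse) (by simpa using cyc_reverse h)
  have := cyc_reverse this
  simpa using this

def combinePair (y z : Letter) : List Letter :=
  match y, z with
  | .A, .A => []
  | .B, .Binv => []
  | .Binv, .B => []
  | .B, .B => [.Binv]
  | .Binv, .Binv => [.B]
  | y, z => [y, z]

lemma binv_binv : gen_b⁻¹ * gen_b⁻¹ = gen_b := by
  rw [← mul_inv_rev, inv_eq_iff_eq_inv, ← b_sq]

lemma combinePair_spec {y z : Letter} (h : ¬ AltPair y z) :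
    evalWord (combinePair y z) = y.toG * z.toG ∧ (combinePair y z).length < 2 := by
  cases y <;> cases z <;>
    simp_all [AltPair, combinePair, evalWord, Letter.toG, rel_a, b_sq, binv_binv]

lemma exists_shorter_of_not_normal {w : List Letter} (h : ¬ NormalWord w) :
    ∃ w', evalWord w' = evalWord w ∧ w'.length < w.length := by
  induction w with
  | nil => exact absurd List.isChain_nil h
  | cons y t ih =>
      cases t with
      | nil => exact absurd (List.isChain_singleton y) h
      | cons z t' =>
          by_cases hyz : AltPair y z
          · have : ¬ NormalWord (z :: t') := fun hn => h (List.isChain_cons_cons.2 ⟨hyz, hn⟩)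
            obtain ⟨w', he, hl⟩ := ih this
            exact ⟨y :: w', by rw [evalWord_cons, he, ← evalWord_cons],
              by simpa using Nat.succ_lt_succ hl⟩
          · obtain ⟨he, hl⟩ := combinePair_spec hyz
            refine ⟨combinePair y z ++ t', ?_, ?_⟩
            · rw [evalWord_append, he, evalWord_cons, evalWord_cons, mul_assoc]
            · simp only [List.length_append, List.length_cons]
              omega

lemma altPair_right_A {a b : Letter} (h : AltPair a b) (ha : a ≠ .A) : b = .A :=
  h.elim (fun h' => absurd h'.1 ha) (fun h' => h'.2)

lemma altPair_left_A {a b : Letter} (h : AltPair a b) (hb : b ≠ .A) : a = .A :=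
  h.elim (fun h' => h'.1) (fun h' => absurd h'.2 hb)

lemma altPair_of_left {a b : Letter} (ha : a = .A) (hb : b ≠ .A) : AltPair a b := Or.inl ⟨ha, hb⟩
lemma altPair_of_right {a b : Letter} (ha : a ≠ .A) (hb : b = .A) : AltPair a b := Or.inr ⟨ha, hb⟩

lemma chain'_glue {l₁ l₂ : List Letter} (h₁ : NormalWord l₁) (h₂ : NormalWord l₂)
    (hj : ∀ a ∈ l₁.getLast?, ∀ b ∈ l₂.head?, AltPair a b) : NormalWord (l₁ ++ l₂) :=
  List.isChain_append.2 ⟨h₁, h₂, hj⟩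

section Alg
variable (X₀ L E g : PSL2Z)

lemma alg_inv_sq (hL3 : L * L * L = 1) : L⁻¹ * L⁻¹ = L := by
  have h : L⁻¹ * L⁻¹ * (L * L * L) = L := by group
  rwa [hL3, mul_one] at h

lemma algA (hL3 : L * L * L = 1) (hg : g = X₀ * L * (L * E) * (X₀ * L)⁻¹) :
    g = X₀ * L⁻¹ * E * L⁻¹ * X₀⁻¹ ∧
    X₀ * L⁻¹ * E * L * E * L⁻¹ * X₀⁻¹ = g * g ∧
    X₀ * L⁻¹ * E * (X₀ * L)⁻¹ = g ∧
    X₀ * L⁻¹ * E * L * E * (X₀ * L)⁻¹ = g * g := by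
  have h3 : L * L = L⁻¹ := by rw [eq_inv_iff_mul_eq_one]; exact hL3
  have h4 : L⁻¹ * L⁻¹ = L := alg_inv_sq L hL3
  have hgA : g = X₀ * L⁻¹ * E * L⁻¹ * X₀⁻¹ := by
    have e : X₀ * L * (L * E) * (X₀ * L)⁻¹
        = X₀ * (L * L) * E * (L * L) * (L * L * L)⁻¹ * X₀⁻¹ := by group
    rw [hg, e, hL3, h3]; group
  have h2nd : X₀ * L⁻¹ * E * L * E * L⁻¹ * X₀⁻¹ = g * g := by
    have e2 : (X₀ * L⁻¹ * E * L⁻¹ * X₀⁻¹) * (X₀ * L⁻¹ * E * L⁻¹ * X₀⁻¹)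
        = X₀ * L⁻¹ * E * (L⁻¹ * L⁻¹) * E * L⁻¹ * X₀⁻¹ := by group
    rw [hgA, e2, h4]
  refine ⟨hgA, h2nd, by rw [hgA]; group, ?_⟩
  calc X₀ * L⁻¹ * E * L * E * (X₀ * L)⁻¹
      = X₀ * L⁻¹ * E * L * E * L⁻¹ * X₀⁻¹ := by group
    _ = g * g := h2nd

lemma algB (hL3 : L * L * L = 1) (hg : g = (X₀ * L) * (E * L⁻¹) * (X₀ * L)⁻¹) :
    X₀ * L * E * L⁻¹ * E * L * X₀⁻¹ = g * g := by
  have h3 : L * L = L⁻¹ := by rw [eq_inv_iff_mul_eq_one]; exact hL3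
  have h4 : L⁻¹ * L⁻¹ = L := alg_inv_sq L hL3
  have hgB : g = X₀ * L * E * L * X₀⁻¹ := by
    have e : (X₀ * L) * (E * L⁻¹) * (X₀ * L)⁻¹ = X₀ * L * E * (L⁻¹ * L⁻¹) * X₀⁻¹ := by group
    rw [hg, e, h4]
  have e2 : (X₀ * L * E * L * X₀⁻¹) * (X₀ * L * E * L * X₀⁻¹)
      = X₀ * L * E * (L * L) * E * L * X₀⁻¹ := by group
  rw [hgB, e2, h3]
end Alg


lemma labelsPathFrom_cons {H : Subgroup PSL2Z} {v : Coset H} {ℓ : Letter} {w : List Letter} :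
    labelsPathFrom H v (ℓ :: w) ↔ edgeOk H v ℓ ∧ labelsPathFrom H (step v ℓ) w := Iff.rfl

lemma labelsPathFrom_singleton {H : Subgroup PSL2Z} {v : Coset H} {ℓ : Letter} :
    labelsPathFrom H v [ℓ] ↔ edgeOk H v ℓ :=
  ⟨fun h => h.1, fun h => ⟨h, trivial⟩⟩

/-- If `H ≤ PSL₂(ℤ)` is finitely generated, `g ∈ H` is non-trivial, and `x` is a
word of minimal length such that `u = x⁻¹ g x` is cyclically reduced, then the
Stallings graph of `H` has an `x`-labeled path from the base vertex to some
vertex `v₁` and a `u`-labeled cycle at `v₁`. -/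
theorem path_and_cycle_of_min_conjugator (H : Subgroup PSL2Z) (hH : H.FG)
    (g : PSL2Z) (hgH : g ∈ H) (hg : g ≠ 1)
    (x u : List Letter) (hu : CyclicallyReducedWord u)
    (hxu : evalWord u = (evalWord x)⁻¹ * g * evalWord x)
    (hmin : ∀ x' u' : List Letter, CyclicallyReducedWord u' →
      evalWord u' = (evalWord x')⁻¹ * g * evalWord x' → x.length ≤ x'.length) :
    labelsPathFrom H (base H) x ∧ labelsCycleAt H (readW (base H) x) u := by
  have hXUX : evalWord x * evalWord u * (evalWord x)⁻¹ = g := by rw [hxu]; group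
  have hcyc : readW (readW (base H) x) u = readW (base H) x := by
    rw [readW_base, readW_mkC, mkC_eq_mkC, hXUX]
    exact hgH
  have hxn : NormalWord x := by
    by_contra hn
    obtain ⟨x', he, hl⟩ := exists_shorter_of_not_normal hn
    have := hmin x' u hu (by rw [he]; exact hxu)
    omega
  rcases x.eq_nil_or_concat with rfl | ⟨x₀, ℓ, hxc⟩

  · -- x = []
    have huH : evalWord u ∈ H := by
      have h : evalWord u = g := by simpa [evalWord] using hxu
      rw [h]; exact hgH
    exact ⟨trivial, pathFrom_of_normal_cycle hu.1 huH, hcyc⟩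
  -- x = x₀ ++ [ℓ]
  rw [List.concat_eq_append] at hxc
  subst hxc
  cases u with
  | nil =>
      rcases hu.2 with h | ⟨xh, yl, hh, _⟩
      · simp at h
      · simp at hh
  | cons m u₁ =>
  obtain ⟨u₂, m', hu2⟩ : ∃ u₂ m', m :: u₁ = u₂ ++ [m'] := by
    rcases (m :: u₁).eq_nil_or_concat with h | ⟨a, b, h⟩
    · simp at h
    · exact ⟨a, b, by rwa [List.concat_eq_append] at h⟩
  have hx₀n : NormalWord x₀ := (List.isChain_append.1 hxn).1
  have hx₀l : ∀ a ∈ x₀.getLast?, AltPair a ℓ := fun a ha =>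
    (List.isChain_append.1 hxn).2.2 a ha ℓ rfl
  have hfwd : m ≠ ℓ.inv := by
    rintro rfl
    have hcr := cyc_rot_fwd hu
    have heq : evalWord (u₁ ++ [Letter.inv ℓ]) = (evalWord x₀)⁻¹ * g * evalWord x₀ := by
      have h1 := hxu
      rw [evalWord_cons, evalWord_append, evalWord_singleton, Letter.toG_inv] at h1
      rw [evalWord_append, evalWord_singleton, Letter.toG_inv]
      have h2 : evalWord u₁
          = ℓ.toG * ((evalWord x₀ * ℓ.toG)⁻¹ * g * (evalWord x₀ * ℓ.toG)) := by
        rw [← h1]; group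
      rw [h2]; group
    have := hmin x₀ _ hcr heq
    simp at this
  have hbwd : ℓ ≠ m' := by
    rintro rfl
    have hcr := cyc_rot_bwd (hu2 ▸ hu)
    have heq : evalWord (ℓ :: u₂) = (evalWord x₀)⁻¹ * g * evalWord x₀ := by
      have h1 := hxu
      rw [hu2, evalWord_append, evalWord_singleton, evalWord_append,
        evalWord_singleton] at h1
      rw [evalWord_cons]
      have h2 : evalWord u₂
          = (evalWord x₀ * ℓ.toG)⁻¹ * g * (evalWord x₀ * ℓ.toG) * ℓ.toG⁻¹ := by
        rw [← h1]; group
      rw [h2]; group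
    have := hmin x₀ _ hcr heq
    simp at this
  by_cases hj1 : AltPair ℓ m
  · by_cases hj2 : AltPair m' ℓ.inv
    · -- Case 1 : no merges
      have hWn : NormalWord ((x₀ ++ [ℓ]) ++ ((m :: u₁) ++ invWord (x₀ ++ [ℓ]))) := by
        refine chain'_glue hxn (chain'_glue hu.1 (normal_invWord hxn) ?_) ?_
        · intro a ha b hb
          rw [hu2, List.getLast?_concat] at ha
          rw [invWord_head?, List.getLast?_concat] at hb
          simp at ha hb
          rw [← ha, ← hb]; exact hj2
        · intro a ha b hb
          rw [List.getLast?_concat] at ha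
          simp at ha hb
          rw [← ha, ← hb]; exact hj1
      have hWH : evalWord ((x₀ ++ [ℓ]) ++ ((m :: u₁) ++ invWord (x₀ ++ [ℓ]))) ∈ H := by
        have h : evalWord ((x₀ ++ [ℓ]) ++ ((m :: u₁) ++ invWord (x₀ ++ [ℓ]))) = g := by
          rw [← hXUX]
          simp only [evalWord_append, evalWord_cons, evalWord_singleton, evalWord_nil, evalWord_invWord]
          group
        rw [h]; exact hgH
      have hpath := pathFrom_of_normal_cycle hWn hWH
      rw [labelsPathFrom_append] at hpath
      have hpu := ((labelsPathFrom_append _ _ _).1 hpath.2).1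
      exact ⟨hpath.1, hpu, hcyc⟩
    · -- Case 3 : merge at the u / x⁻¹ junction
      have hm' : m' = ℓ.inv ∧ ℓ ≠ Letter.A := by
        revert hj2 hbwd
        cases ℓ <;> cases m' <;> simp [AltPair, Letter.inv]
      obtain ⟨hm'eq, hℓA⟩ := hm'
      subst hm'eq
      have hinvA : ℓ.inv ≠ Letter.A := fun hA => hℓA ((Letter.inv_eq_A ℓ).1 hA)
      have hu₂ne : u₂ ≠ [] := by
        rintro rfl
        simp at hu2
        exact hfwd hu2.1
      have hun2 : NormalWord (u₂ ++ [ℓ.inv]) := hu2 ▸ hu.1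
      have hu₂n : NormalWord u₂ := (List.isChain_append.1 hun2).1
      have hu₂l : ∀ a ∈ u₂.getLast?, a = Letter.A := by
        intro a ha
        exact altPair_left_A ((List.isChain_append.1 hun2).2.2 a ha ℓ.inv (by simp)) hinvA
      have hmA : m = Letter.A := by
        have hlen : (m :: u₁).length ≠ 1 := by
          rw [hu2, List.length_append]
          rcases u₂ with _ | ⟨a, t⟩
          · exact absurd rfl hu₂ne
          · simp
        obtain ⟨xh, yl, hh, hl, halt⟩ := hu.2.resolve_left hlen
        have hxh : xh = m := by simpa using hh.symm
        have hyl : yl = ℓ.inv := by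
          rw [hu2, List.getLast?_concat] at hl
          simpa using hl.symm
        subst hxh; subst hyl
        exact altPair_left_A halt hinvA
      have hu₂h : u₂.head? = some Letter.A := by
        have h := List.head?_append_of_ne_nil u₂ (l₂ := [ℓ.inv]) hu₂ne
        rw [← hu2] at h
        rw [← h, List.head?_cons, hmA]
      have hinvh : ∀ b ∈ (invWord x₀).head?, b = Letter.A := by
        intro b hb
        rw [invWord_head?] at hb
        simp only [Option.mem_def, Option.map_eq_some_iff] at hb
        obtain ⟨a, ha, rfl⟩ := hb
        rw [Letter.inv_eq_A]
        exact altPair_left_A (hx₀l a (by simp [ha])) hℓA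
      -- the witness word for g²
      have hW₃n : NormalWord ((x₀ ++ [ℓ]) ++ ((u₂ ++ [ℓ.inv]) ++ (u₂ ++ ([ℓ] ++ invWord x₀)))) := by
        refine chain'_glue hxn (chain'_glue (chain'_glue hu₂n (List.isChain_singleton _) ?_)
          (chain'_glue hu₂n (chain'_glue (List.isChain_singleton _) (normal_invWord hx₀n) ?_) ?_)
          ?_) ?_
        · intro a ha b hb
          simp at hb
          subst hb
          exact altPair_of_left (hu₂l a ha) hinvA
        · intro a ha b hb
          simp at ha
          subst ha
          exact altPair_of_right hℓA (hinvh b hb)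
        · intro a ha b hb
          rw [List.head?_append_of_ne_nil _ (by simp : ([ℓ] : List Letter) ≠ [])] at hb
          simp at hb
          subst hb
          exact altPair_of_left (hu₂l a ha) hℓA
        · intro a ha b hb
          rw [List.getLast?_concat] at ha
          rw [List.head?_append_of_ne_nil _ hu₂ne, hu₂h] at hb
          simp at ha hb
          subst ha; subst hb
          exact altPair_of_right hinvA rfl
        · intro a ha b hb
          rw [List.getLast?_concat] at ha
          rw [List.head?_append_of_ne_nil _ (by simp [hu₂ne] : u₂ ++ [ℓ.inv] ≠ []),
            List.head?_append_of_ne_nil _ hu₂ne, hu₂h] at hb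
          simp at ha hb
          subst ha; subst hb
          exact altPair_of_right hℓA rfl
      have hgE : g = (evalWord x₀ * ℓ.toG) * (evalWord u₂ * ℓ.toG⁻¹) * (evalWord x₀ * ℓ.toG)⁻¹ := by
        rw [← hXUX, hu2]
        simp only [evalWord_append, evalWord_cons, evalWord_singleton, evalWord_nil, Letter.toG_inv]
        group
      have hW₃e : evalWord ((x₀ ++ [ℓ]) ++ ((u₂ ++ [ℓ.inv]) ++ (u₂ ++ ([ℓ] ++ invWord x₀))))
          = evalWord x₀ * ℓ.toG * evalWord u₂ * ℓ.toG⁻¹ * evalWord u₂ * ℓ.toG * (evalWord x₀)⁻¹ := by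
        simp only [evalWord_append, evalWord_cons, evalWord_singleton, evalWord_nil, evalWord_invWord,
          Letter.toG_inv]
        group
      have hW₃H : evalWord ((x₀ ++ [ℓ]) ++ ((u₂ ++ [ℓ.inv]) ++ (u₂ ++ ([ℓ] ++ invWord x₀)))) ∈ H := by
        rw [hW₃e, algB (evalWord x₀) ℓ.toG (evalWord u₂) g (Letter.toG_cube ℓ hℓA) hgE]
        exact mul_mem hgH hgH
      have hpath := pathFrom_of_normal_cycle hW₃n hW₃H
      rw [labelsPathFrom_append] at hpath
      have hpu := ((labelsPathFrom_append _ _ _).1 hpath.2).1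
      rw [hu2] at hcyc ⊢
      exact ⟨hpath.1, hpu, hcyc⟩
  · -- Case 2 : merge at the x / u junction
    have hm : ℓ = m ∧ ℓ ≠ Letter.A := by
      revert hj1 hfwd
      cases ℓ <;> cases m <;> simp [AltPair, Letter.inv]
    obtain ⟨hmeq, hℓA⟩ := hm
    subst hmeq
    have hinvA : ℓ.inv ≠ Letter.A := fun hA => hℓA ((Letter.inv_eq_A ℓ).1 hA)
    have hu₁ne : u₁ ≠ [] := by
      rintro rfl
      rcases u₂ with _ | ⟨a, t⟩
      · simp at hu2
        exact hbwd hu2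
      · simp at hu2
    have hu₁n : NormalWord u₁ := (List.isChain_cons.1 hu.1).2
    have hu₁h : u₁.head? = some Letter.A := by
      have h := (List.isChain_cons.1 hu.1).1 _ (List.head?_eq_head hu₁ne)
      rw [List.head?_eq_head hu₁ne, altPair_right_A h hℓA]
    have hu₁l : ∀ a ∈ u₁.getLast?, a = Letter.A := by
      intro a ha
      obtain ⟨c, t, rfl⟩ : ∃ c t, u₁ = c :: t := by
        rcases u₁ with _ | ⟨c, t⟩
        · exact absurd rfl hu₁ne
        · exact ⟨c, t, rfl⟩
      have hlen : (ℓ :: c :: t).length ≠ 1 := by simp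
      obtain ⟨xh, yl, hh, hl, halt⟩ := hu.2.resolve_left hlen
      have hxh : xh = ℓ := by simpa using hh.symm
      subst hxh
      rw [List.getLast?_cons_cons] at hl
      rw [Option.mem_def, hl] at ha
      have ha' : yl = a := by simpa using ha
      rw [← ha']
      exact altPair_right_A halt hℓA
    have hx₀lA : ∀ a ∈ x₀.getLast?, a = Letter.A := fun a ha => altPair_left_A (hx₀l a ha) hℓA
    have hinvh : ∀ b ∈ (invWord x₀).head?, b = Letter.A := by
      intro b hb
      rw [invWord_head?] at hb
      simp only [Option.mem_def, Option.map_eq_some_iff] at hb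
      obtain ⟨a, ha, rfl⟩ := hb
      rw [Letter.inv_eq_A]
      exact hx₀lA a (by simp [ha])
    -- the witness word for g²
    have hW₂n : NormalWord (x₀ ++ ([ℓ.inv] ++ (u₁ ++ ([ℓ] ++ (u₁ ++ ([ℓ.inv] ++ invWord x₀)))))) := by
      refine chain'_glue hx₀n (chain'_glue (List.isChain_singleton _)
        (chain'_glue hu₁n (chain'_glue (List.isChain_singleton _)
          (chain'_glue hu₁n (chain'_glue (List.isChain_singleton _) (normal_invWord hx₀n) ?_)
            ?_) ?_) ?_) ?_) ?_
      · intro a ha b hb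
        simp at ha
        subst ha
        exact altPair_of_right hinvA (hinvh b hb)
      · intro a ha b hb
        rw [List.head?_append_of_ne_nil _ (by simp : ([ℓ.inv] : List Letter) ≠ [])] at hb
        simp at hb
        subst hb
        exact altPair_of_left (hu₁l a ha) hinvA
      · intro a ha b hb
        rw [List.head?_append_of_ne_nil _ hu₁ne, hu₁h] at hb
        simp at ha hb
        subst ha; subst hb
        exact altPair_of_right hℓA rfl
      · intro a ha b hb
        rw [List.head?_append_of_ne_nil _ (by simp : ([ℓ] : List Letter) ≠ [])] at hb
        simp at hb
        subst hb
        exact altPair_of_left (hu₁l a ha) hℓA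
      · intro a ha b hb
        rw [List.head?_append_of_ne_nil _ hu₁ne, hu₁h] at hb
        simp at ha hb
        subst ha; subst hb
        exact altPair_of_right hinvA rfl
      · intro a ha b hb
        simp at hb
        subst hb
        exact altPair_of_left (hx₀lA a ha) hinvA
    have hgE : g = evalWord x₀ * ℓ.toG * (ℓ.toG * evalWord u₁) * (evalWord x₀ * ℓ.toG)⁻¹ := by
      rw [← hXUX]
      simp only [evalWord_append, evalWord_cons, evalWord_singleton, evalWord_nil, Letter.toG_inv]
      group
    obtain ⟨hgA, h2nd, h3rd, h4th⟩ :=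
      algA (evalWord x₀) ℓ.toG (evalWord u₁) g (Letter.toG_cube ℓ hℓA) hgE
    have hW₂e : evalWord (x₀ ++ ([ℓ.inv] ++ (u₁ ++ ([ℓ] ++ (u₁ ++ ([ℓ.inv] ++ invWord x₀))))))
        = evalWord x₀ * ℓ.toG⁻¹ * evalWord u₁ * ℓ.toG * evalWord u₁ * ℓ.toG⁻¹ * (evalWord x₀)⁻¹ := by
      simp only [evalWord_append, evalWord_cons, evalWord_singleton, evalWord_nil,
        evalWord_invWord, Letter.toG_inv]
      group
    have hW₂H : evalWord (x₀ ++ ([ℓ.inv] ++ (u₁ ++ ([ℓ] ++ (u₁ ++ ([ℓ.inv] ++ invWord x₀)))))) ∈ H := by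
      rw [hW₂e, h2nd]
      exact mul_mem hgH hgH
    have hpW := pathFrom_of_normal_cycle hW₂n hW₂H
    have hpx₀ : labelsPathFrom H (base H) x₀ := ((labelsPathFrom_append _ _ _).1 hpW).1
    have hedgex : edgeOk H (readW (base H) x₀) ℓ := by
      rw [readW_base]
      apply edgeOk_of_aux_rev
      have haux := edgeOkAux_intro (H := H) hW₂n hW₂H (x₀ ++ [ℓ.inv] ++ u₁ ++ [ℓ] ++ u₁) ℓ.inv
        (invWord x₀) (by simp)
      have hv : mkC H (evalWord (x₀ ++ [ℓ.inv] ++ u₁ ++ [ℓ] ++ u₁))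
          = mkC H (evalWord x₀ * ℓ.toG) := by
        rw [mkC_eq_mkC]
        have e : evalWord (x₀ ++ [ℓ.inv] ++ u₁ ++ [ℓ] ++ u₁) * (evalWord x₀ * ℓ.toG)⁻¹
            = evalWord x₀ * ℓ.toG⁻¹ * evalWord u₁ * ℓ.toG * evalWord u₁
              * (evalWord x₀ * ℓ.toG)⁻¹ := by
          simp only [evalWord_append, evalWord_cons, evalWord_singleton, evalWord_nil,
            Letter.toG_inv]
          group
        rw [e, h4th]
        exact mul_mem hgH hgH
      rw [step_mkC, ← hv]
      exact haux
    have hpathx : labelsPathFrom H (base H) (x₀ ++ [ℓ]) :=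
      (labelsPathFrom_append _ _ _).2 ⟨hpx₀, labelsPathFrom_singleton.2 hedgex⟩
    have hX : evalWord (x₀ ++ [ℓ]) = evalWord x₀ * ℓ.toG := by
      rw [evalWord_append, evalWord_singleton]
    have hedgeu : edgeOk H (mkC H (evalWord x₀ * ℓ.toG)) ℓ := by
      apply edgeOk_of_aux
      have haux := edgeOkAux_intro (H := H) hW₂n hW₂H (x₀ ++ [ℓ.inv] ++ u₁) ℓ
        (u₁ ++ ([ℓ.inv] ++ invWord x₀)) (by simp)
      have hv : mkC H (evalWord (x₀ ++ [ℓ.inv] ++ u₁)) = mkC H (evalWord x₀ * ℓ.toG) := by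
        rw [mkC_eq_mkC]
        have e : evalWord (x₀ ++ [ℓ.inv] ++ u₁) * (evalWord x₀ * ℓ.toG)⁻¹
            = evalWord x₀ * ℓ.toG⁻¹ * evalWord u₁ * (evalWord x₀ * ℓ.toG)⁻¹ := by
          simp only [evalWord_append, evalWord_cons, evalWord_singleton, evalWord_nil,
            Letter.toG_inv]
          group
        rw [e, h3rd]
        exact hgH
      rw [← hv]
      exact haux
    have hrest : labelsPathFrom H (step (mkC H (evalWord x₀ * ℓ.toG)) ℓ) u₁ := by
      have hW₂' := hpW
      rw [show x₀ ++ ([ℓ.inv] ++ (u₁ ++ ([ℓ] ++ (u₁ ++ ([ℓ.inv] ++ invWord x₀)))))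
          = (x₀ ++ [ℓ.inv]) ++ (u₁ ++ ([ℓ] ++ (u₁ ++ ([ℓ.inv] ++ invWord x₀)))) by simp] at hW₂'
      have h2 := ((labelsPathFrom_append _ _ _).1 hW₂').2
      have h3 := ((labelsPathFrom_append _ _ _).1 h2).1
      rw [readW_base] at h3
      rw [step_mkC]
      have hvv : evalWord x₀ * ℓ.toG * ℓ.toG = evalWord (x₀ ++ [Letter.inv ℓ]) := by
        rw [evalWord_append, evalWord_singleton, Letter.toG_inv, mul_assoc,
          Letter.toG_sq ℓ hℓA]
      rw [hvv]
      exact h3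
    have hpathu : labelsPathFrom H (readW (base H) (x₀ ++ [ℓ])) (ℓ :: u₁) := by
      rw [readW_base, hX]
      exact ⟨hedgeu, hrest⟩
    exact ⟨hpathx, hpathu, hcyc⟩
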